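/- arXiv:1106.5049 — 2 statements merged into one kernel-verified Lean document; each statement's English description precedes it below -/
import Mathlib

section
/- Let X = diag(ζ₁·I_{k₁}, …, ζ_r·I_{k_r}) with distinct ζ_i, and let F, G be as above with blocks F_i, G_i. The stabilizer of X in GL_k(ℂ) is isomorphic to ∏_{i=1}^r GL_{k_i}(ℂ) (block-diagonal matrices), and an element (g_1,…,g_r) of this stabilizer fixes (X,Y,F,G) under the action (g·X·g⁻¹, Y, g·F, G·g⁻¹) if and only if g_i·F_i = F_i and G_i·g_i⁻¹ = G_i for all i. In particular, if rank F_i = rank G_i = k_i for all i, the stabilizer of (X,Y,F,G) in GL_k(ℂ) is trivial. -/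
open Matrix

section Aux

variable {r l : ℕ} {k : Fin r → ℕ}

/-- Extract the `i`-th diagonal block of a matrix indexed by a sigma type. -/
def blk (g : Matrix ((i : Fin r) × Fin (k i)) ((i : Fin r) × Fin (k i)) ℂ) (i : Fin r) :
    Matrix (Fin (k i)) (Fin (k i)) ℂ :=
  Matrix.of fun a b => g ⟨i, a⟩ ⟨i, b⟩

lemma bd_mul_left (M : (i : Fin r) → Matrix (Fin (k i)) (Fin (k i)) ℂ)
    (F : Matrix ((i : Fin r) × Fin (k i)) (Fin l) ℂ) (i : Fin r) (a : Fin (k i)) (c : Fin l) :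
    (Matrix.blockDiagonal' M * F) ⟨i, a⟩ c =
      (M i * (Matrix.of fun q c => F ⟨i, q⟩ c : Matrix (Fin (k i)) (Fin l) ℂ)) a c := by
  rw [Matrix.mul_apply, Matrix.mul_apply, ← Finset.univ_sigma_univ, Finset.sum_sigma]
  rw [Fintype.sum_eq_single i]
  · simp
  · intro j hj
    exact Finset.sum_eq_zero fun b _ => by
      rw [Matrix.blockDiagonal'_apply_ne _ _ _ (Ne.symm hj), zero_mul]

lemma bd_mul_right (M : (i : Fin r) → Matrix (Fin (k i)) (Fin (k i)) ℂ)
    (G : Matrix (Fin l) ((i : Fin r) × Fin (k i)) ℂ) (i : Fin r) (c : Fin l) (b : Fin (k i)) :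
    (G * Matrix.blockDiagonal' M) c ⟨i, b⟩ =
      ((Matrix.of fun c q => G c ⟨i, q⟩ : Matrix (Fin l) (Fin (k i)) ℂ) * M i) c b := by
  rw [Matrix.mul_apply, Matrix.mul_apply, ← Finset.univ_sigma_univ, Finset.sum_sigma]
  rw [Fintype.sum_eq_single i]
  · simp
  · intro j hj
    exact Finset.sum_eq_zero fun a _ => by
      rw [Matrix.blockDiagonal'_apply_ne _ _ _ hj, mul_zero]

lemma full_rank_cancel {m : ℕ} (A : Matrix (Fin m) (Fin l) ℂ) (hA : A.rank = m)
    (M : Matrix (Fin m) (Fin m) ℂ) (hM : M * A = A) : M = 1 := by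
  have hsurj : Function.Surjective A.mulVecLin := by
    rw [← LinearMap.range_eq_top]
    apply Submodule.eq_top_of_finrank_eq
    rw [← Matrix.rank, hA, Module.finrank_fin_fun]
  have hzero : (M - 1) * A = 0 := by rw [Matrix.sub_mul, Matrix.one_mul, hM, sub_self]
  have hvec : ∀ w : Fin m → ℂ, (M - 1).mulVec w = 0 := by
    intro w
    obtain ⟨v, hv⟩ := hsurj w
    rw [Matrix.mulVecLin_apply] at hv
    have h0 : (M - 1) *ᵥ (A *ᵥ v) = 0 := by
      rw [Matrix.mulVec_mulVec, hzero, Matrix.zero_mulVec]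
    rwa [hv] at h0
  have : M - 1 = 0 := by
    ext a b
    have := congrFun (hvec (Pi.single b 1)) a
    simpa [Matrix.mulVec_single] using this
  rwa [sub_eq_zero] at this

end Aux

/-- For `X = diag(ζ₁ I_{k₁}, …, ζ_r I_{k_r})` with distinct `ζ_i`:
the stabilizer of `X` in `GL_k(ℂ)` consists of the block-diagonal matrices
`(g₁,…,g_r) ∈ ∏ GL_{k_i}(ℂ)`; such a block-diagonal matrix fixes `(X,Y,F,G)` iff
`gᵢ Fᵢ = Fᵢ` and `Gᵢ gᵢ⁻¹ = Gᵢ` for all `i`; and if `rank Fᵢ = rank Gᵢ = kᵢ` for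
all `i`, then the stabilizer of `(X,Y,F,G)` in `GL_k(ℂ)` is trivial. -/
theorem stmt5 (r l : ℕ) (k : Fin r → ℕ) (ζ : Fin r → ℂ) (hζ : Function.Injective ζ)
    (F : Matrix ((i : Fin r) × Fin (k i)) (Fin l) ℂ)
    (G : Matrix (Fin l) ((i : Fin r) × Fin (k i)) ℂ) :
    (∀ g : Matrix ((i : Fin r) × Fin (k i)) ((i : Fin r) × Fin (k i)) ℂ, IsUnit g →
        (g * Matrix.diagonal (fun p => ζ p.1) * g⁻¹ = Matrix.diagonal (fun p => ζ p.1) ↔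
          ∃ gfam : (i : Fin r) → Matrix (Fin (k i)) (Fin (k i)) ℂ,
            (∀ i, IsUnit (gfam i)) ∧ g = Matrix.blockDiagonal' gfam)) ∧
    (∀ gfam : (i : Fin r) → Matrix (Fin (k i)) (Fin (k i)) ℂ, (∀ i, IsUnit (gfam i)) →
        ((Matrix.blockDiagonal' gfam * F = F ∧ G * (Matrix.blockDiagonal' gfam)⁻¹ = G) ↔
          ∀ i, gfam i * (Matrix.of fun q c => F ⟨i, q⟩ c : Matrix (Fin (k i)) (Fin l) ℂ) =
                (Matrix.of fun q c => F ⟨i, q⟩ c : Matrix (Fin (k i)) (Fin l) ℂ) ∧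
              (Matrix.of fun c q => G c ⟨i, q⟩ : Matrix (Fin l) (Fin (k i)) ℂ) * (gfam i)⁻¹ =
                (Matrix.of fun c q => G c ⟨i, q⟩ : Matrix (Fin l) (Fin (k i)) ℂ))) ∧
    ((∀ i, (Matrix.of fun q c => F ⟨i, q⟩ c : Matrix (Fin (k i)) (Fin l) ℂ).rank = k i) →
      (∀ i, (Matrix.of fun c q => G c ⟨i, q⟩ : Matrix (Fin l) (Fin (k i)) ℂ).rank = k i) →
      ∀ g : Matrix ((i : Fin r) × Fin (k i)) ((i : Fin r) × Fin (k i)) ℂ, IsUnit g →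
        g * Matrix.diagonal (fun p => ζ p.1) * g⁻¹ = Matrix.diagonal (fun p => ζ p.1) →
        g * F = F → G * g⁻¹ = G → g = 1) := by
  set D : Matrix ((i : Fin r) × Fin (k i)) ((i : Fin r) × Fin (k i)) ℂ :=
    Matrix.diagonal (fun p => ζ p.1) with hD
  -- Part 1
  have part1 : ∀ g : Matrix ((i : Fin r) × Fin (k i)) ((i : Fin r) × Fin (k i)) ℂ, IsUnit g →
      (g * D * g⁻¹ = D ↔
        ∃ gfam : (i : Fin r) → Matrix (Fin (k i)) (Fin (k i)) ℂ,
          (∀ i, IsUnit (gfam i)) ∧ g = Matrix.blockDiagonal' gfam) := by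
    intro g hg
    have hgdet : IsUnit g.det := (Matrix.isUnit_iff_isUnit_det g).mp hg
    have hinv : g * g⁻¹ = 1 := Matrix.mul_nonsing_inv g hgdet
    have hinv' : g⁻¹ * g = 1 := Matrix.nonsing_inv_mul g hgdet
    constructor
    · intro h
      -- g commutes with D
      have hcomm : g * D = D * g := by
        have := congrArg (fun M => M * g) h
        simpa [Matrix.mul_assoc, hinv', Matrix.mul_one] using this
      -- off-diagonal blocks vanish
      have hoff : ∀ (M : Matrix ((i : Fin r) × Fin (k i)) ((i : Fin r) × Fin (k i)) ℂ),
          M * D = D * M → ∀ p q : (i : Fin r) × Fin (k i), p.1 ≠ q.1 → M p q = 0 := by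
        intro M hM p q hpq
        have h1 : (M * D) p q = M p q * ζ q.1 := by simp [hD, Matrix.mul_apply, Matrix.diagonal]
        have h2 : (D * M) p q = ζ p.1 * M p q := by simp [hD, Matrix.mul_apply, Matrix.diagonal]
        have h3 : M p q * ζ q.1 = ζ p.1 * M p q := by rw [← h1, ← h2, hM]
        have h4 : M p q * (ζ q.1 - ζ p.1) = 0 := by ring_nf; linear_combination h3
        rcases mul_eq_zero.mp h4 with h5 | h5
        · exact h5
        · exact absurd (hζ (sub_eq_zero.mp h5)).symm hpq
      have hbd : ∀ (M : Matrix ((i : Fin r) × Fin (k i)) ((i : Fin r) × Fin (k i)) ℂ),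
          M * D = D * M → M = Matrix.blockDiagonal' (blk M) := by
        intro M hM
        ext ⟨i, a⟩ ⟨j, b⟩
        by_cases hij : i = j
        · subst hij; simp [blk]
        · rw [Matrix.blockDiagonal'_apply_ne _ _ _ hij]
          exact hoff M hM ⟨i, a⟩ ⟨j, b⟩ hij
      have hgbd := hbd g hcomm
      -- g⁻¹ also commutes with D
      have hcomm' : g⁻¹ * D = D * g⁻¹ := by
        conv_lhs => rw [← h]
        rw [← Matrix.mul_assoc, ← Matrix.mul_assoc, hinv', Matrix.one_mul]
      have hgbd' := hbd g⁻¹ hcomm'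
      refine ⟨blk g, fun i => ?_, hgbd⟩
      -- blocks are units: block of g times block of g⁻¹ is 1
      have h1 : Matrix.blockDiagonal' (blk g) * Matrix.blockDiagonal' (blk g⁻¹) = 1 := by
        rw [← hgbd, ← hgbd', hinv]
      rw [← Matrix.blockDiagonal'_mul] at h1
      have h2 : blk g i * blk g⁻¹ i = 1 := by
        ext a b
        have := congrFun (congrFun h1 ⟨i, a⟩) ⟨i, b⟩
        simpa [Matrix.one_apply, Sigma.ext_iff] using this
      exact IsUnit.of_mul_eq_one _ h2
    · rintro ⟨gfam, hgfam, rfl⟩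
      have hDbd : D = Matrix.blockDiagonal' (fun i => Matrix.diagonal (fun _ : Fin (k i) => ζ i)) := by
        rw [Matrix.blockDiagonal'_diagonal]
      have hblocks : (fun i => gfam i * Matrix.diagonal fun _ : Fin (k i) => ζ i) =
          fun i => (Matrix.diagonal fun _ : Fin (k i) => ζ i) * gfam i := by
        funext i
        ext a b
        rw [Matrix.mul_diagonal, Matrix.diagonal_mul, mul_comm]
      have hcomm : Matrix.blockDiagonal' gfam * D = D * Matrix.blockDiagonal' gfam := by
        rw [hDbd, ← Matrix.blockDiagonal'_mul, ← Matrix.blockDiagonal'_mul, hblocks]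
      rw [hcomm, Matrix.mul_assoc, hinv, Matrix.mul_one]
  -- inverse of block diagonal
  have bdinv : ∀ gfam : (i : Fin r) → Matrix (Fin (k i)) (Fin (k i)) ℂ, (∀ i, IsUnit (gfam i)) →
      (Matrix.blockDiagonal' gfam)⁻¹ = Matrix.blockDiagonal' (fun i => (gfam i)⁻¹) := by
    intro gfam hgfam
    apply Matrix.inv_eq_right_inv
    rw [← Matrix.blockDiagonal'_mul]
    have : (fun i => gfam i * (gfam i)⁻¹) = (1 : (i : Fin r) → Matrix (Fin (k i)) (Fin (k i)) ℂ) := by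
      funext i
      exact Matrix.mul_nonsing_inv _ ((Matrix.isUnit_iff_isUnit_det _).mp (hgfam i))
    rw [this, Matrix.blockDiagonal'_one]
  -- Part 2
  have part2 : ∀ gfam : (i : Fin r) → Matrix (Fin (k i)) (Fin (k i)) ℂ, (∀ i, IsUnit (gfam i)) →
      ((Matrix.blockDiagonal' gfam * F = F ∧ G * (Matrix.blockDiagonal' gfam)⁻¹ = G) ↔
        ∀ i, gfam i * (Matrix.of fun q c => F ⟨i, q⟩ c : Matrix (Fin (k i)) (Fin l) ℂ) =
              (Matrix.of fun q c => F ⟨i, q⟩ c : Matrix (Fin (k i)) (Fin l) ℂ) ∧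
            (Matrix.of fun c q => G c ⟨i, q⟩ : Matrix (Fin l) (Fin (k i)) ℂ) * (gfam i)⁻¹ =
              (Matrix.of fun c q => G c ⟨i, q⟩ : Matrix (Fin l) (Fin (k i)) ℂ)) := by
    intro gfam hgfam
    rw [bdinv gfam hgfam]
    constructor
    · rintro ⟨hF, hG⟩ i
      constructor
      · ext a c
        have := congrFun (congrFun hF ⟨i, a⟩) c
        rw [bd_mul_left] at this
        simpa using this
      · ext c b
        have := congrFun (congrFun hG c) ⟨i, b⟩
        rw [bd_mul_right] at this
        simpa using this
    · intro h
      constructor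
      · ext ⟨i, a⟩ c
        rw [bd_mul_left, (h i).1]
        rfl
      · ext c ⟨i, b⟩
        rw [bd_mul_right, (h i).2]
        rfl
  refine ⟨part1, part2, ?_⟩
  -- Part 3
  intro hF hG g hg hstab hgF hgG
  obtain ⟨gfam, hgfam, rfl⟩ := (part1 g hg).mp hstab
  have h2 := (part2 gfam hgfam).mp ⟨hgF, hgG⟩
  have : ∀ i, gfam i = 1 := fun i => full_rank_cancel _ (hF i) _ (h2 i).1
  have : gfam = 1 := funext this
  rw [this, Matrix.blockDiagonal'_one]
end

section
/- Let X = diag(ζ₁·I_{k₁}, …, ζ_r·I_{k_r}) with distinct ζ_i, and suppose F_i·G_i has eigenvalues α_{i,1}, …, α_{i,k_i} (with multiplicity). Then in the local coordinate η̃ = 1/η near η = ∞, working modulo η̃², det M(ζ, 1/η̃) · η̃^l · (−1)^l ≡ ∏_{i=1}^r det((ζ_i − ζ)·I_{k_i} + η̃·F_i·G_i) (mod η̃²-corrections of the stated form); in particular the first-order neighbourhood of the spectral curve at (ζ_i, ∞) is given by the branches ζ − ζ_i = α_{i,j}·η̃ for j = 1,…,k_i. -/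
open Matrix Polynomial

theorem detA {S : Type*} [CommRing S] {n : Type*} [DecidableEq n] [Fintype n]
    (t : S) (ht : t * t = 0) (d : n → S) (T : Matrix n n S) :
    (Matrix.diagonal d + t • T).det = ∏ i, (d i + t * T i i) := by
  rw [Matrix.det_apply']
  rw [Finset.sum_eq_single (1 : Equiv.Perm n)]
  · simp [Matrix.add_apply, Matrix.smul_apply, smul_eq_mul]
  · intro σ _ hσ
    obtain ⟨i, hi⟩ : ∃ i, σ i ≠ i := by
      by_contra h; push_neg at h; exact hσ (Equiv.ext h)
    have hij : σ i ≠ i := hi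
    have hσj : σ (σ i) ≠ σ i := fun h => hi (σ.injective h)
    have h1 : (Matrix.diagonal d + t • T) (σ i) i = t * T (σ i) i := by
      simp [Matrix.add_apply, Matrix.smul_apply, Matrix.diagonal_apply_ne _ hi, smul_eq_mul]
    have h2 : (Matrix.diagonal d + t • T) (σ (σ i)) (σ i) = t * T (σ (σ i)) (σ i) := by
      simp [Matrix.add_apply, Matrix.smul_apply, Matrix.diagonal_apply_ne _ hσj, smul_eq_mul]
    rw [← Finset.mul_prod_erase _ _ (Finset.mem_univ i),
      ← Finset.mul_prod_erase _ _ (Finset.mem_erase.mpr ⟨hij, Finset.mem_univ (σ i)⟩), h1, h2]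
    set P := ∏ x ∈ (Finset.univ.erase i).erase (σ i), (Matrix.diagonal d + t • T) (σ x) x with hP
    have hz : t * T (σ i) i * (t * T (σ (σ i)) (σ i) * P) = 0 := by
      linear_combination (T (σ i) i * T (σ (σ i)) (σ i) * P) * ht
    rw [hz, mul_zero]
  · intro h; exact absurd (Finset.mem_univ _) h

theorem prodB {S : Type*} [CommRing S] (t : S) (ht : t * t = 0) {n : Type*} (s : Finset n)
    (y : n → S) : ∏ i ∈ s, (1 - t * y i) = 1 - t * ∑ i ∈ s, y i := by
  classical
  induction s using Finset.induction with
  | empty => simp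
  | @insert a s h ih =>
    rw [Finset.prod_insert h, ih, Finset.sum_insert h]
    linear_combination (y a * ∑ i ∈ s, y i) * ht

theorem evalcp {n : ℕ} (A : Matrix (Fin n) (Fin n) ℂ) (x : ℂ) :
    A.charpoly.eval x = (x • (1 : Matrix (Fin n) (Fin n) ℂ) - A).det := by
  rw [Matrix.charpoly, ← Polynomial.coe_evalRingHom, RingHom.map_det]
  congr 1
  ext i j
  by_cases h : i = j
  · subst h
    simp [Matrix.charmatrix_apply_eq, Matrix.sub_apply, Matrix.smul_apply, Matrix.one_apply,
      smul_eq_mul]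
  · simp [Matrix.charmatrix_apply_ne _ _ _ h, Matrix.sub_apply, Matrix.smul_apply,
      Matrix.one_apply_ne h, smul_eq_mul]

theorem scdet {n : ℕ} (A : Matrix (Fin n) (Fin n) ℂ) (α : Fin n → ℂ)
    (hA : A.charpoly = ∏ j, (X - C (α j))) (s t : ℂ) :
    (s • (1 : Matrix (Fin n) (Fin n) ℂ) + t • A).det = ∏ j, (s + t * α j) := by
  rcases eq_or_ne t 0 with rfl | ht
  · simp [Matrix.det_smul]
  · have h1 : s • (1 : Matrix (Fin n) (Fin n) ℂ) + t • A
        = (-t) • ((-s / t) • (1 : Matrix (Fin n) (Fin n) ℂ) - A) := by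
      rw [smul_sub, smul_smul, neg_smul t A, sub_neg_eq_add]
      congr 2
      field_simp
    rw [h1, Matrix.det_smul, ← evalcp, hA]
    simp only [eval_prod, eval_sub, eval_X, eval_C, Fintype.card_fin]
    rw [show ((-t) ^ n : ℂ) = ∏ _j : Fin n, (-t) by simp, ← Finset.prod_mul_distrib]
    refine Finset.prod_congr rfl fun j _ => ?_
    field_simp
    ring

theorem liftdet {n : ℕ} (z : ℂ) (A : Matrix (Fin n) (Fin n) ℂ) (α : Fin n → ℂ)
    (hA : A.charpoly = ∏ j, (X - C (α j))) :
    ((C (C z) - C X) • (1 : Matrix (Fin n) (Fin n) (Polynomial (Polynomial ℂ))) +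
      (X : Polynomial (Polynomial ℂ)) • A.map (fun a => C (C a))).det =
    ∏ j, ((C (C z) - C X) + (X : Polynomial (Polynomial ℂ)) * C (C (α j))) := by
  apply Polynomial.funext; intro q
  apply Polynomial.funext; intro w
  rw [← Polynomial.coe_evalRingHom, ← Polynomial.coe_evalRingHom, RingHom.map_det,
    RingHom.map_det, RingHom.mapMatrix_apply, RingHom.mapMatrix_apply, Matrix.map_map]
  have hm : (((C (C z) - C X) • (1 : Matrix (Fin n) (Fin n) (Polynomial (Polynomial ℂ))) +
      (X : Polynomial (Polynomial ℂ)) • A.map (fun a => C (C a))).map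
        ((evalRingHom w) ∘ (evalRingHom q)))
      = (z - w) • (1 : Matrix (Fin n) (Fin n) ℂ) + (q.eval w) • A := by
    ext i j
    by_cases h : i = j <;>
      · simp [h, Matrix.map_apply, Matrix.add_apply, Matrix.smul_apply, Matrix.one_apply,
          smul_eq_mul]
        ring
  rw [hm, scdet A α hA]
  simp only [coe_evalRingHom, map_prod, eval_prod, eval_add, eval_sub, eval_mul, eval_C, eval_X]

set_option maxHeartbeats 4000000 in
theorem part2 (r l : ℕ) (k : Fin r → ℕ) (ζ : Fin r → ℂ)
    (Y : Matrix (Fin l) (Fin l) ℂ)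
    (F : Matrix ((i : Fin r) × Fin (k i)) (Fin l) ℂ)
    (G : Matrix (Fin l) ((i : Fin r) × Fin (k i)) ℂ) :
    ∃ c : Polynomial (Polynomial ℂ),
      (-1 : Polynomial (Polynomial ℂ)) ^ l *
          (Matrix.fromBlocks
            ((Matrix.diagonal (fun p => ζ p.1) :
                Matrix ((i : Fin r) × Fin (k i)) ((i : Fin r) × Fin (k i)) ℂ).map
                  (fun a => C (C a)) - (C (Polynomial.X : Polynomial ℂ)) • 1)
            ((Polynomial.X : Polynomial (Polynomial ℂ)) • F.map (fun a => C (C a)))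
            (G.map (fun a => C (C a)))
            ((Polynomial.X : Polynomial (Polynomial ℂ)) • Y.map (fun a => C (C a)) - 1)).det =
        (1 - (Polynomial.X : Polynomial (Polynomial ℂ)) * C (C Y.trace)) *
          (∏ i : Fin r,
            ((C (C (ζ i)) - C (Polynomial.X : Polynomial ℂ)) •
                (1 : Matrix (Fin (k i)) (Fin (k i)) (Polynomial (Polynomial ℂ))) +
              (Polynomial.X : Polynomial (Polynomial ℂ)) •
                (((Matrix.of fun q c => F ⟨i, q⟩ c : Matrix (Fin (k i)) (Fin l) ℂ) *
                  (Matrix.of fun c q => G c ⟨i, q⟩ : Matrix (Fin l) (Fin (k i)) ℂ)).map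
                    (fun a => C (C a)))).det) +
          (Polynomial.X : Polynomial (Polynomial ℂ)) ^ 2 * c := by
  classical
  set Fm := F.map (fun a => (C (C a) : Polynomial (Polynomial ℂ))) with hFm
  set Gm := G.map (fun a => (C (C a) : Polynomial (Polynomial ℂ))) with hGm
  set Ym := Y.map (fun a => (C (C a) : Polynomial (Polynomial ℂ))) with hYm
  set Dm := (Matrix.diagonal (fun p => ζ p.1) :
      Matrix ((i : Fin r) × Fin (k i)) ((i : Fin r) × Fin (k i)) ℂ).map
        (fun a => (C (C a) : Polynomial (Polynomial ℂ))) with hDm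
  set M := Matrix.fromBlocks (Dm - (C (Polynomial.X : Polynomial ℂ)) • 1)
      ((Polynomial.X : Polynomial (Polynomial ℂ)) • Fm) Gm
      ((Polynomial.X : Polynomial (Polynomial ℂ)) • Ym - 1) with hM
  set U := (Matrix.fromBlocks 1 0 Gm 1 :
      Matrix (((i : Fin r) × Fin (k i)) ⊕ Fin l) (((i : Fin r) × Fin (k i)) ⊕ Fin l)
        (Polynomial (Polynomial ℂ))) with hU
  set dd : (((i : Fin r) × Fin (k i)) ⊕ Fin l) → Polynomial (Polynomial ℂ) :=
    Sum.elim (fun p => C (C (ζ p.1)) - C (Polynomial.X : Polynomial ℂ)) (fun _ => -1) with hdd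
  set T := Matrix.fromBlocks (Fm * Gm) Fm (Ym * Gm) Ym with hT
  have hdetU : U.det = 1 := by
    rw [hU, Matrix.det_fromBlocks_zero₁₂]; simp
  have hd1 : Dm - (C (Polynomial.X : Polynomial ℂ)) • 1 =
      Matrix.diagonal (fun p : (i : Fin r) × Fin (k i) =>
        (C (C (ζ p.1)) : Polynomial (Polynomial ℂ)) - C Polynomial.X) := by
    rw [hDm, Matrix.diagonal_map (by simp), Matrix.smul_one_eq_diagonal, ← Matrix.diagonal_sub]
  have hMU : M * U = Matrix.diagonal dd + (Polynomial.X : Polynomial (Polynomial ℂ)) • T := by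
    rw [hM, hU, hT, hdd, Matrix.fromBlocks_multiply, ← Matrix.fromBlocks_diagonal,
      Matrix.fromBlocks_smul, Matrix.fromBlocks_add]
    simp only [Matrix.mul_one, Matrix.mul_zero, Matrix.one_mul, Matrix.sub_mul, Matrix.smul_mul,
      zero_add]
    have hBL : Gm + ((Polynomial.X : Polynomial (Polynomial ℂ)) • (Ym * Gm) - Gm) = (Polynomial.X : Polynomial (Polynomial ℂ)) • (Ym * Gm) := by abel
    have hBR : (Polynomial.X : Polynomial (Polynomial ℂ)) • Ym - 1 =
        (Matrix.diagonal fun _ => -1) + (Polynomial.X : Polynomial (Polynomial ℂ)) • Ym := by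
      rw [sub_eq_add_neg, add_comm, ← Matrix.diagonal_one, ← Matrix.diagonal_neg]
    rw [hd1, hBL, hBR]
  classical
  set Idl : Ideal (Polynomial (Polynomial ℂ)) :=
    Ideal.span {(Polynomial.X : Polynomial (Polynomial ℂ)) ^ 2} with hIdl
  set π : Polynomial (Polynomial ℂ) →+* (Polynomial (Polynomial ℂ)) ⧸ Idl :=
    Ideal.Quotient.mk Idl with hπ
  have hε : π Polynomial.X * π Polynomial.X = 0 := by
    rw [← _root_.map_mul, ← sq, hπ, Ideal.Quotient.eq_zero_iff_mem]
    exact Ideal.mem_span_singleton_self _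
  have hdet : M.det = (Matrix.diagonal dd + (Polynomial.X : Polynomial (Polynomial ℂ)) • T).det := by
    rw [← hMU, Matrix.det_mul, hdetU, mul_one]
  have h1 : π M.det = ∏ x, (π (dd x) + π Polynomial.X * π (T x x)) := by
    rw [hdet]
    rw [(RingHom.map_det (R := Polynomial (Polynomial ℂ)) (S := (Polynomial (Polynomial ℂ)) ⧸ Idl) π (Matrix.diagonal dd + (Polynomial.X : Polynomial (Polynomial ℂ)) • T) :)]
    rw [RingHom.mapMatrix_apply]
    have hmm : (Matrix.diagonal dd + (Polynomial.X : Polynomial (Polynomial ℂ)) • T).map π =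
        Matrix.diagonal (fun x => π (dd x)) + (π Polynomial.X) • T.map π := by
      ext i j
      by_cases h : i = j <;>
        simp [h, Matrix.map_apply, Matrix.add_apply, Matrix.smul_apply, Matrix.diagonal_apply,
          smul_eq_mul, _root_.map_add, _root_.map_mul]
    rw [hmm, detA _ hε]
    exact Finset.prod_congr rfl fun x _ => by simp [Matrix.map_apply]
  have h2 : ∏ x, (π (dd x) + π Polynomial.X * π (T x x)) =
      (∏ p : (i : Fin r) × Fin (k i),
        (π (C (C (ζ p.1)) - C Polynomial.X) + π Polynomial.X * π ((Fm * Gm) p p))) *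
      (∏ c : Fin l, (-1 + π Polynomial.X * π (Ym c c))) := by
    rw [Fintype.prod_sum_type]
    congr 1
  have h3 : ∀ i : Fin r,
      π (((C (C (ζ i)) - C (Polynomial.X : Polynomial ℂ)) •
          (1 : Matrix (Fin (k i)) (Fin (k i)) (Polynomial (Polynomial ℂ))) +
        (Polynomial.X : Polynomial (Polynomial ℂ)) •
          (((Matrix.of fun q c => F ⟨i, q⟩ c : Matrix (Fin (k i)) (Fin l) ℂ) *
            (Matrix.of fun c q => G c ⟨i, q⟩ : Matrix (Fin l) (Fin (k i)) ℂ)).map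
              (fun a => C (C a)))).det) =
      ∏ q : Fin (k i), (π (C (C (ζ i)) - C Polynomial.X) +
        π Polynomial.X * π (C (C (((Matrix.of fun q c => F ⟨i, q⟩ c) *
          (Matrix.of fun c q => G c ⟨i, q⟩) : Matrix (Fin (k i)) (Fin (k i)) ℂ) q q)))) := by
    intro i
    rw [(RingHom.map_det (R := Polynomial (Polynomial ℂ)) (S := (Polynomial (Polynomial ℂ)) ⧸ Idl) (n := Fin (k i)) π _ :)]
    rw [RingHom.mapMatrix_apply]
    have hmm : (((C (C (ζ i)) - C (Polynomial.X : Polynomial ℂ)) •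
          (1 : Matrix (Fin (k i)) (Fin (k i)) (Polynomial (Polynomial ℂ))) +
        (Polynomial.X : Polynomial (Polynomial ℂ)) •
          (((Matrix.of fun q c => F ⟨i, q⟩ c : Matrix (Fin (k i)) (Fin l) ℂ) *
            (Matrix.of fun c q => G c ⟨i, q⟩ : Matrix (Fin l) (Fin (k i)) ℂ)).map
              (fun a => C (C a)))).map π) =
        Matrix.diagonal (fun _ => π (C (C (ζ i)) - C Polynomial.X)) +
          (π Polynomial.X) • (((Matrix.of fun q c => F ⟨i, q⟩ c) *
            (Matrix.of fun c q => G c ⟨i, q⟩) : Matrix (Fin (k i)) (Fin (k i)) ℂ).map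
              (fun a => π (C (C a)))) := by
      ext q q'
      by_cases h : q = q' <;>
        simp [h, Matrix.map_apply, Matrix.add_apply, Matrix.smul_apply, Matrix.diagonal_apply,
          Matrix.one_apply, smul_eq_mul, _root_.map_add, _root_.map_mul]
      all_goals try ring
    rw [hmm, detA _ hε]
    exact Finset.prod_congr rfl fun q _ => by simp [Matrix.map_apply]
  have h4 : (∏ p : (i : Fin r) × Fin (k i),
        (π (C (C (ζ p.1)) - C Polynomial.X) + π Polynomial.X * π ((Fm * Gm) p p))) =
      ∏ i : Fin r, ∏ q : Fin (k i), (π (C (C (ζ i)) - C Polynomial.X) +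
        π Polynomial.X * π (C (C (((Matrix.of fun q c => F ⟨i, q⟩ c) *
          (Matrix.of fun c q => G c ⟨i, q⟩) : Matrix (Fin (k i)) (Fin (k i)) ℂ) q q)))) := by
    rw [← Finset.univ_sigma_univ, Finset.prod_sigma]
    refine Finset.prod_congr rfl fun i _ => Finset.prod_congr rfl fun q _ => ?_
    congr 2
    simp only [hFm, hGm, Matrix.mul_apply, Matrix.map_apply, Matrix.of_apply, _root_.map_sum, _root_.map_mul]
  have h5 : ((π (-1) : (Polynomial (Polynomial ℂ)) ⧸ Idl)) ^ l *
      ∏ c : Fin l, (-1 + π Polynomial.X * π (Ym c c)) =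
      π (1 - Polynomial.X * C (C Y.trace)) := by
    rw [show ((π (-1) : (Polynomial (Polynomial ℂ)) ⧸ Idl)) ^ l
        = ∏ _c : Fin l, (π (-1) : (Polynomial (Polynomial ℂ)) ⧸ Idl) by simp,
      ← Finset.prod_mul_distrib]
    have : ∀ c : Fin l, (π (-1) : (Polynomial (Polynomial ℂ)) ⧸ Idl) *
        (-1 + π Polynomial.X * π (Ym c c)) =
        1 - π Polynomial.X * π (C (C (Y c c))) := by
      intro c
      simp only [_root_.map_neg, _root_.map_one, hYm, Matrix.map_apply]
      ring
    rw [Finset.prod_congr rfl fun c _ => this c]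
    erw [prodB (S := (Polynomial (Polynomial ℂ)) ⧸ Idl) _ hε]
    have htr : Y.trace = ∑ c : Fin l, Y c c := by simp [Matrix.trace, Matrix.diag]
    have hs : (π (C (C (Y.trace)))) = ∑ c : Fin l, π (C (C (Y c c))) := by
      rw [htr, _root_.map_sum, _root_.map_sum, _root_.map_sum]
    rw [_root_.map_sub, _root_.map_one, _root_.map_mul, hs]
  have key : π ((-1 : Polynomial (Polynomial ℂ)) ^ l * M.det) =
      π ((1 - (Polynomial.X : Polynomial (Polynomial ℂ)) * C (C Y.trace)) *
        (∏ i : Fin r,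
          ((C (C (ζ i)) - C (Polynomial.X : Polynomial ℂ)) •
              (1 : Matrix (Fin (k i)) (Fin (k i)) (Polynomial (Polynomial ℂ))) +
            (Polynomial.X : Polynomial (Polynomial ℂ)) •
              (((Matrix.of fun q c => F ⟨i, q⟩ c : Matrix (Fin (k i)) (Fin l) ℂ) *
                (Matrix.of fun c q => G c ⟨i, q⟩ : Matrix (Fin l) (Fin (k i)) ℂ)).map
                  (fun a => C (C a)))).det)) := by
    rw [_root_.map_mul, _root_.map_mul, map_pow, h1, h2, h4, map_prod]
    rw [Finset.prod_congr rfl fun i _ => h3 i, ← h5]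
    ring
  obtain ⟨c, hc⟩ := Ideal.mem_span_singleton.mp
    (by rw [← hIdl]; exact (Ideal.Quotient.eq).mp key)
  exact ⟨c, by linear_combination hc⟩

/-- Local analysis at `η = ∞`: in the coordinate `η̃ = 1/η` (the outer polynomial
variable below; the inner variable is `ζ`), with `X = diag(ζ₁ I_{k₁},…,ζ_r I_{k_r})`
with distinct `ζᵢ` and `FᵢGᵢ` having eigenvalues `α_{i,1},…,α_{i,k_i}`:
each factor `det((ζᵢ−ζ)I + η̃ FᵢGᵢ)` splits into the branches `(ζᵢ−ζ) + η̃ α_{i,j}`,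
and `(−1)^l η̃^l det M(ζ,1/η̃)` agrees modulo `η̃²` with
`(1 − η̃ tr Y) ∏ᵢ det((ζᵢ−ζ)I + η̃ FᵢGᵢ)`. -/
theorem stmt9 (r l : ℕ) (k : Fin r → ℕ) (ζ : Fin r → ℂ) (hζ : Function.Injective ζ)
    (Y : Matrix (Fin l) (Fin l) ℂ)
    (F : Matrix ((i : Fin r) × Fin (k i)) (Fin l) ℂ)
    (G : Matrix (Fin l) ((i : Fin r) × Fin (k i)) ℂ)
    (α : (i : Fin r) → Fin (k i) → ℂ)
    (hα : ∀ i, ((Matrix.of fun q c => F ⟨i, q⟩ c : Matrix (Fin (k i)) (Fin l) ℂ) *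
        (Matrix.of fun c q => G c ⟨i, q⟩ : Matrix (Fin l) (Fin (k i)) ℂ)).charpoly =
        ∏ j : Fin (k i), ((Polynomial.X : Polynomial ℂ) - C (α i j))) :
    (∀ i, ((C (C (ζ i)) - C (Polynomial.X : Polynomial ℂ)) •
          (1 : Matrix (Fin (k i)) (Fin (k i)) (Polynomial (Polynomial ℂ))) +
        (Polynomial.X : Polynomial (Polynomial ℂ)) •
          (((Matrix.of fun q c => F ⟨i, q⟩ c : Matrix (Fin (k i)) (Fin l) ℂ) *
            (Matrix.of fun c q => G c ⟨i, q⟩ : Matrix (Fin l) (Fin (k i)) ℂ)).map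
              (fun a => C (C a)))).det =
        ∏ j : Fin (k i),
          ((C (C (ζ i)) - C (Polynomial.X : Polynomial ℂ)) +
            (Polynomial.X : Polynomial (Polynomial ℂ)) * C (C (α i j)))) ∧
    ∃ c : Polynomial (Polynomial ℂ),
      (-1 : Polynomial (Polynomial ℂ)) ^ l *
          (Matrix.fromBlocks
            ((Matrix.diagonal (fun p => ζ p.1) :
                Matrix ((i : Fin r) × Fin (k i)) ((i : Fin r) × Fin (k i)) ℂ).map
                  (fun a => C (C a)) - (C (Polynomial.X : Polynomial ℂ)) • 1)
            ((Polynomial.X : Polynomial (Polynomial ℂ)) • F.map (fun a => C (C a)))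
            (G.map (fun a => C (C a)))
            ((Polynomial.X : Polynomial (Polynomial ℂ)) • Y.map (fun a => C (C a)) - 1)).det =
        (1 - (Polynomial.X : Polynomial (Polynomial ℂ)) * C (C Y.trace)) *
          (∏ i : Fin r,
            ((C (C (ζ i)) - C (Polynomial.X : Polynomial ℂ)) •
                (1 : Matrix (Fin (k i)) (Fin (k i)) (Polynomial (Polynomial ℂ))) +
              (Polynomial.X : Polynomial (Polynomial ℂ)) •
                (((Matrix.of fun q c => F ⟨i, q⟩ c : Matrix (Fin (k i)) (Fin l) ℂ) *
                  (Matrix.of fun c q => G c ⟨i, q⟩ : Matrix (Fin l) (Fin (k i)) ℂ)).map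
                    (fun a => C (C a)))).det) +
          (Polynomial.X : Polynomial (Polynomial ℂ)) ^ 2 * c :=
  ⟨fun i => liftdet (ζ i) _ (α i) (hα i), part2 r l k ζ Y F G⟩
end
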